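/- For all a ∈ ℝ^q and b ∈ ℝ, E|⟨a, W⟩ + b| ≥ (η/2) ‖a‖. -/

import Mathlib

open MeasureTheory
open scoped RealInnerProductSpace

/-- Let `W : Ω → ℝ^q` be integrable with mean `μ`, and suppose `E|⟨u, W − μ⟩| ≥ η > 0`
for every unit vector `u`.  Then `E|⟨a, W⟩ + b| ≥ (η/2)‖a‖` for all `a ∈ ℝ^q`, `b ∈ ℝ`. -/
theorem expectation_abs_inner_add_ge_half_eta_norm
    (q : ℕ) (hq : 1 ≤ q) {Ω : Type*} [MeasurableSpace Ω]
    (P : Measure Ω) [IsProbabilityMeasure P]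
    (W : Ω → EuclideanSpace ℝ (Fin q)) (hWmeas : Measurable W)
    (hWint : Integrable W P)
    (μ : EuclideanSpace ℝ (Fin q)) (hμ : μ = ∫ ω, W ω ∂P)
    (η : ℝ) (hη : 0 < η)
    (hsep : ∀ u : EuclideanSpace ℝ (Fin q), ‖u‖ = 1 → η ≤ ∫ ω, |⟪u, W ω - μ⟫| ∂P) :
    ∀ (a : EuclideanSpace ℝ (Fin q)) (b : ℝ),
      η / 2 * ‖a‖ ≤ ∫ ω, |⟪a, W ω⟫ + b| ∂P := by
  intro a b
  rcases eq_or_ne a 0 with rfl | ha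
  · simp only [norm_zero, mul_zero]
    exact integral_nonneg fun ω => abs_nonneg _
  have hna : (0:ℝ) < ‖a‖ := norm_pos_iff.mpr ha
  set u : EuclideanSpace ℝ (Fin q) := ‖a‖⁻¹ • a with hu_def
  have hu : ‖u‖ = 1 := by
    rw [hu_def, norm_smul, norm_inv, norm_norm, inv_mul_cancel₀ hna.ne']
  set c : ℝ := ⟪u, μ⟫ + b / ‖a‖ with hc_def
  set X : Ω → ℝ := fun ω => ⟪u, W ω - μ⟫ with hX_def
  -- integrability
  have hintWμ : Integrable (fun ω => W ω - μ) P := hWint.sub (integrable_const μ)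
  have hXint : Integrable X P := hintWμ.const_inner u
  have hXcint : Integrable (fun ω => X ω + c) P := hXint.add (integrable_const c)
  -- mean zero
  have hXmean : ∫ ω, X ω ∂P = 0 := by
    rw [hX_def]
    rw [integral_inner hintWμ]
    have : (∫ ω, (W ω - μ) ∂P) = 0 := by
      rw [integral_sub hWint (integrable_const μ), integral_const]
      simp [← hμ]
    rw [this, inner_zero_right]
  have hXabs : η ≤ ∫ ω, |X ω| ∂P := hsep u hu
  -- key bound
  have key : η / 2 ≤ ∫ ω, |X ω + c| ∂P := by
    rcases le_or_gt (η / 2) |c| with hc | hc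
    · calc η / 2 ≤ |c| := hc
        _ = |∫ ω, (X ω + c) ∂P| := by
            rw [integral_add hXint (integrable_const c), hXmean, integral_const]
            simp
        _ ≤ ∫ ω, |X ω + c| ∂P := by
            simpa [Real.norm_eq_abs] using norm_integral_le_integral_norm (fun ω => X ω + c) (μ := P)
    · have h1 : ∫ ω, |X ω| ∂P ≤ (∫ ω, |X ω + c| ∂P) + |c| := by
        have : ∫ ω, |X ω| ∂P ≤ ∫ ω, (|X ω + c| + |c|) ∂P := by
          apply integral_mono hXint.abs (hXcint.abs.add (integrable_const _))
          intro ω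
          calc |X ω| = |(X ω + c) + (-c)| := by ring_nf
            _ ≤ |X ω + c| + |(-c)| := abs_add_le _ _
            _ = |X ω + c| + |c| := by rw [abs_neg]
        rwa [integral_add hXcint.abs (integrable_const _), integral_const,
          probReal_univ, smul_eq_mul, one_mul] at this
      linarith
  -- rewrite the target integral
  have hrw : ∀ ω, |⟪a, W ω⟫ + b| = ‖a‖ * |X ω + c| := by
    intro ω
    have : ⟪a, W ω⟫ + b = ‖a‖ * (X ω + c) := by
      rw [hX_def, hc_def, hu_def]
      simp only [inner_sub_right, real_inner_smul_left]
      field_simp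
      ring
    rw [this, abs_mul, abs_of_pos hna]
  calc η / 2 * ‖a‖ = ‖a‖ * (η / 2) := by ring
    _ ≤ ‖a‖ * ∫ ω, |X ω + c| ∂P := by
        exact mul_le_mul_of_nonneg_left key hna.le
    _ = ∫ ω, ‖a‖ * |X ω + c| ∂P := (integral_const_mul _ _).symm
    _ = ∫ ω, |⟪a, W ω⟫ + b| ∂P := by
        congr 1; ext ω; rw [hrw ω]
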